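/- arXiv:1901.07758 — 2 statements merged into one kernel-verified Lean document; each statement's English description precedes it below -/
import Mathlib

section
/- Let f_θ : ℝ^d → ℝ^m be a fully connected neural network with n_l layers and componentwise tanh activations, defined by y_2(x) = tanh(W_1 x + b_1), y_{i+1} = tanh(W_i y_i + b_i) for i = 2, …, n_l − 1, and f_θ(x) = W_{n_l} y_{n_l} + b_{n_l}. If there is a constant C > 0, C ≠ 1, such that the spectral norm of every weight matrix satisfies ‖W_i‖₂ ≤ C for i = 1, …, n_l, then the second Fréchet derivative of f_θ is uniformly bounded: for every x ∈ ℝ^d, ‖∂²f_θ(x)/∂x²‖₂ ≤ 2 C^{n_l+1} (C^{n_l−1} − 1)/(C − 1), where the left-hand side is the operator norm of the second derivative as a bilinear map. -/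
set_option maxHeartbeats 1000000

/-- Componentwise hyperbolic tangent on Euclidean space. -/
noncomputable def tanhVec {n : ℕ} (v : EuclideanSpace ℝ (Fin n)) :
    EuclideanSpace ℝ (Fin n) :=
  WithLp.toLp 2 (fun i => Real.tanh (v i))

/-- The composition of the first `k` (affine + tanh) hidden layers of a fully
connected network: `nnHidden dims W b 0 = id`, and
`nnHidden dims W b (k+1) x = tanh (W_k (nnHidden dims W b k x) + b_k)`
(tanh applied componentwise).  Thus `nnHidden dims W b k` corresponds to the
hidden-layer map `y_{k+1}` of the paper. -/
noncomputable def nnHidden (dims : ℕ → ℕ)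
    (W : ∀ i : ℕ, EuclideanSpace ℝ (Fin (dims i)) →L[ℝ] EuclideanSpace ℝ (Fin (dims (i + 1))))
    (b : ∀ i : ℕ, EuclideanSpace ℝ (Fin (dims (i + 1)))) :
    (k : ℕ) → EuclideanSpace ℝ (Fin (dims 0)) → EuclideanSpace ℝ (Fin (dims k))
  | 0 => id
  | k + 1 => fun x => tanhVec (W k (nnHidden dims W b k x) + b k)

noncomputable section NNAux

open Real ContinuousLinearMap

variable {n : ℕ}

/-- Diagonal multiplication, as a continuous linear map into operators on Euclidean space. -/
def diagE (n : ℕ) : (Fin n → ℝ) →L[ℝ] (EuclideanSpace ℝ (Fin n) →L[ℝ] EuclideanSpace ℝ (Fin n)) :=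
  LinearMap.toContinuousLinearMap
  { toFun := fun a => LinearMap.toContinuousLinearMap
      { toFun := fun u => WithLp.toLp 2 (fun i => a i * u i)
        map_add' := fun u v => by ext i; simp [mul_add]
        map_smul' := fun c u => by ext i; simp [smul_eq_mul]; ring }
    map_add' := fun a a' => by ext u i; simp [add_mul]
    map_smul' := fun c a => by ext u i; simp [smul_eq_mul]; ring }

@[simp] lemma diagE_apply (a : Fin n → ℝ) (u : EuclideanSpace ℝ (Fin n)) (i : Fin n) :
    diagE n a u i = a i * u i := rfl

/-- Diagonal multiplication, as a continuous linear map into maps to the sup-normed pi type. -/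
def diagP (n : ℕ) : (Fin n → ℝ) →L[ℝ] (EuclideanSpace ℝ (Fin n) →L[ℝ] (Fin n → ℝ)) :=
  LinearMap.toContinuousLinearMap
  { toFun := fun a => LinearMap.toContinuousLinearMap
      { toFun := fun u => fun i => a i * u i
        map_add' := fun u v => funext fun i => by simp [mul_add]
        map_smul' := fun c u => funext fun i => by simp [smul_eq_mul]; ring }
    map_add' := fun a a' => by ext u i; simp [add_mul]
    map_smul' := fun c a => by ext u i; simp [smul_eq_mul]; ring }

@[simp] lemma diagP_apply (a : Fin n → ℝ) (u : EuclideanSpace ℝ (Fin n)) (i : Fin n) :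
    diagP n a u i = a i * u i := rfl

lemma euclid_coord_le (u : EuclideanSpace ℝ (Fin n)) (i : Fin n) : ‖u i‖ ≤ ‖u‖ := by
  rw [EuclideanSpace.norm_eq]
  have h : ‖u i‖ ^ 2 ≤ ∑ j, ‖u j‖ ^ 2 :=
    Finset.single_le_sum (f := fun j => ‖u j‖ ^ 2) (fun j _ => sq_nonneg _) (Finset.mem_univ i)
  calc ‖u i‖ = Real.sqrt (‖u i‖ ^ 2) := (Real.sqrt_sq (norm_nonneg _)).symm
    _ ≤ _ := Real.sqrt_le_sqrt h

lemma norm_diagE_apply_le (a : Fin n → ℝ) : ‖diagE n a‖ ≤ ‖a‖ := by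
  refine opNorm_le_bound _ (norm_nonneg a) fun u => ?_
  rw [EuclideanSpace.norm_eq (diagE n a u), EuclideanSpace.norm_eq u]
  have h1 : ∀ i : Fin n, ‖diagE n a u i‖ ^ 2 ≤ ‖a‖ ^ 2 * ‖u i‖ ^ 2 := by
    intro i
    rw [diagE_apply, norm_mul, mul_pow]
    gcongr
    exact norm_le_pi_norm a i
  calc Real.sqrt (∑ i, ‖diagE n a u i‖ ^ 2)
      ≤ Real.sqrt (∑ i, ‖a‖ ^ 2 * ‖u i‖ ^ 2) :=
        Real.sqrt_le_sqrt (Finset.sum_le_sum fun i _ => h1 i)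
    _ = Real.sqrt (‖a‖ ^ 2 * ∑ i, ‖u i‖ ^ 2) := by rw [Finset.mul_sum]
    _ = ‖a‖ * Real.sqrt (∑ i, ‖u i‖ ^ 2) := by
        rw [Real.sqrt_mul (by positivity), Real.sqrt_sq (norm_nonneg a)]

lemma norm_diagE_le : ‖diagE n‖ ≤ 1 :=
  opNorm_le_bound _ zero_le_one fun a =>
    (norm_diagE_apply_le a).trans_eq (one_mul _).symm

lemma norm_diagP_apply_le (a : Fin n → ℝ) : ‖diagP n a‖ ≤ ‖a‖ := by
  refine opNorm_le_bound _ (norm_nonneg a) fun u => ?_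
  refine pi_norm_le_iff_of_nonneg (by positivity) |>.2 fun i => ?_
  rw [diagP_apply, norm_mul]
  exact mul_le_mul (norm_le_pi_norm a i) (euclid_coord_le u i) (norm_nonneg _) (norm_nonneg _)

lemma tanh_sq_lt_one (x : ℝ) : Real.tanh x ^ 2 < 1 := by
  rw [Real.tanh_eq_sinh_div_cosh, div_pow, div_lt_one (by positivity)]
  nlinarith [Real.cosh_sq_sub_sinh_sq x]

lemma hasDerivAt_tanh (x : ℝ) : HasDerivAt Real.tanh (1 - Real.tanh x ^ 2) x := by
  have h := (Real.hasDerivAt_sinh x).div (Real.hasDerivAt_cosh x) (Real.cosh_pos x).ne'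
  have hfun : Real.tanh = fun y => Real.sinh y / Real.cosh y := by
    funext y; exact Real.tanh_eq_sinh_div_cosh y
  rw [hfun]
  refine h.congr_deriv ?_
  have hc := (Real.cosh_pos x).ne'
  have hs := Real.cosh_sq_sub_sinh_sq x
  show _ = 1 - (Real.sinh x / Real.cosh x) ^ 2
  rw [div_pow, one_sub_div (pow_ne_zero 2 hc)]
  ring

/-- The componentwise derivative of `tanh` along a vector. -/
def dtanhE (v : EuclideanSpace ℝ (Fin n)) : Fin n → ℝ := fun i => 1 - Real.tanh (v i) ^ 2

/-- The componentwise second derivative of `tanh` along a vector. -/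
def d2tanhE (v : EuclideanSpace ℝ (Fin n)) : Fin n → ℝ :=
  fun i => -(2 * Real.tanh (v i) * (1 - Real.tanh (v i) ^ 2))

lemma norm_dtanhE_le (v : EuclideanSpace ℝ (Fin n)) : ‖dtanhE v‖ ≤ 1 := by
  refine pi_norm_le_iff_of_nonneg zero_le_one |>.2 fun i => ?_
  have h := _root_.tanh_sq_lt_one (v i)
  simp only [dtanhE, Real.norm_eq_abs, abs_le]
  constructor <;> nlinarith [sq_nonneg (Real.tanh (v i))]

lemma norm_d2tanhE_le (v : EuclideanSpace ℝ (Fin n)) : ‖d2tanhE v‖ ≤ 2 := by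
  refine pi_norm_le_iff_of_nonneg (by norm_num) |>.2 fun i => ?_
  have h := _root_.tanh_sq_lt_one (v i)
  simp only [d2tanhE, Real.norm_eq_abs, abs_le]
  constructor <;> nlinarith [sq_nonneg (Real.tanh (v i)), sq_nonneg (Real.tanh (v i) - 1),
    sq_nonneg (Real.tanh (v i) + 1)]

lemma hasFDerivAt_proj (v : EuclideanSpace ℝ (Fin n)) (i : Fin n) :
    HasFDerivAt (fun x : EuclideanSpace ℝ (Fin n) => x i)
      (EuclideanSpace.proj (𝕜 := ℝ) i) v :=
  (EuclideanSpace.proj (𝕜 := ℝ) i).hasFDerivAt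

lemma hasFDerivAt_tanhVec (v : EuclideanSpace ℝ (Fin n)) :
    HasFDerivAt tanhVec (diagE n (dtanhE v)) v := by
  rw [← (PiLp.continuousLinearEquiv 2 ℝ (fun _ : Fin n => ℝ)).comp_hasFDerivAt_iff]
  refine hasFDerivAt_pi'' fun i => ?_
  have hcomp : HasFDerivAt (fun x : EuclideanSpace ℝ (Fin n) => Real.tanh (x i))
      ((1 - Real.tanh (v i) ^ 2) • (EuclideanSpace.proj i : EuclideanSpace ℝ (Fin n) →L[ℝ] ℝ)) v :=
    (hasDerivAt_tanh (v i)).comp_hasFDerivAt (f := fun x : EuclideanSpace ℝ (Fin n) => x i) v (hasFDerivAt_proj v i)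
  convert hcomp using 1
  all_goals ext u; simp [dtanhE, tanhVec, mul_comm]

lemma hasFDerivAt_dtanhE (v : EuclideanSpace ℝ (Fin n)) :
    HasFDerivAt (fun w : EuclideanSpace ℝ (Fin n) => dtanhE w) (diagP n (d2tanhE v)) v := by
  refine hasFDerivAt_pi'' fun i => ?_
  have hd : HasDerivAt (fun t : ℝ => 1 - Real.tanh t ^ 2)
      (-(2 * Real.tanh (v i) * (1 - Real.tanh (v i) ^ 2))) (v i) := by
    have := ((hasDerivAt_tanh (v i)).pow 2).const_sub 1
    refine this.congr_deriv ?_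
    norm_num
  have hcomp : HasFDerivAt (fun x : EuclideanSpace ℝ (Fin n) => 1 - Real.tanh (x i) ^ 2)
      ((-(2 * Real.tanh (v i) * (1 - Real.tanh (v i) ^ 2))) •
        (EuclideanSpace.proj i : EuclideanSpace ℝ (Fin n) →L[ℝ] ℝ)) v :=
    hd.comp_hasFDerivAt (f := fun x : EuclideanSpace ℝ (Fin n) => x i) v (hasFDerivAt_proj v i)
  convert hcomp using 1
  all_goals ext u; simp [d2tanhE, dtanhE, mul_comm]

/-- The recursive bound on the second derivative of the hidden layers. -/
def Bb (C : ℝ) : ℕ → ℝ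
  | 0 => 0
  | k + 1 => C * Bb C k + 2 * C ^ (2 * k + 2)

lemma Bb_eq (C : ℝ) (hC1 : C ≠ 1) :
    ∀ m : ℕ, Bb C m = 2 * C ^ (m + 1) * ((C ^ m - 1) / (C - 1)) := by
  have hne : C - 1 ≠ 0 := sub_ne_zero.mpr hC1
  intro m
  induction m with
  | zero => simp [Bb]
  | succ k ih =>
    rw [Bb, ih]
    field_simp
    ring

lemma norm_compL_comp_le {X Y F G : Type*} [NormedAddCommGroup X] [NormedSpace ℝ X]
    [NormedAddCommGroup Y] [NormedSpace ℝ Y]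
    [NormedAddCommGroup F] [NormedSpace ℝ F] [NormedAddCommGroup G] [NormedSpace ℝ G]
    (f : F →L[ℝ] G) (h : Y →L[ℝ] (X →L[ℝ] F)) :
    ‖(ContinuousLinearMap.compL ℝ X F G f).comp h‖ ≤ ‖f‖ * ‖h‖ := by
  refine ContinuousLinearMap.opNorm_le_bound _ (by positivity) fun u => ?_
  rw [ContinuousLinearMap.comp_apply, ContinuousLinearMap.compL_apply]
  calc ‖f.comp (h u)‖ ≤ ‖f‖ * ‖h u‖ := ContinuousLinearMap.opNorm_comp_le _ _
    _ ≤ ‖f‖ * (‖h‖ * ‖u‖) := by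
        have := h.le_opNorm u
        gcongr
    _ = ‖f‖ * ‖h‖ * ‖u‖ := by ring

lemma norm_compL_flip_comp_le {X Y F G : Type*} [NormedAddCommGroup X] [NormedSpace ℝ X]
    [NormedAddCommGroup Y] [NormedSpace ℝ Y]
    [NormedAddCommGroup F] [NormedSpace ℝ F] [NormedAddCommGroup G] [NormedSpace ℝ G]
    (g : X →L[ℝ] F) (c : Y →L[ℝ] (F →L[ℝ] G)) :
    ‖((ContinuousLinearMap.compL ℝ X F G).flip g).comp c‖ ≤ ‖c‖ * ‖g‖ := by
  refine ContinuousLinearMap.opNorm_le_bound _ (by positivity) fun u => ?_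
  rw [ContinuousLinearMap.comp_apply, ContinuousLinearMap.flip_apply,
    ContinuousLinearMap.compL_apply]
  calc ‖(c u).comp g‖ ≤ ‖c u‖ * ‖g‖ := ContinuousLinearMap.opNorm_comp_le _ _
    _ ≤ (‖c‖ * ‖u‖) * ‖g‖ := by
        have := c.le_opNorm u
        gcongr
    _ = ‖c‖ * ‖g‖ * ‖u‖ := by ring

lemma nn_deriv_bounds (dims : ℕ → ℕ)
    (W : ∀ i : ℕ, EuclideanSpace ℝ (Fin (dims i)) →L[ℝ] EuclideanSpace ℝ (Fin (dims (i + 1))))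
    (b : ∀ i : ℕ, EuclideanSpace ℝ (Fin (dims (i + 1))))
    (C : ℝ) (hC : 0 < C) :
    ∀ k : ℕ, (∀ i < k, ‖W i‖ ≤ C) →
    ∃ (G : EuclideanSpace ℝ (Fin (dims 0)) →
        (EuclideanSpace ℝ (Fin (dims 0)) →L[ℝ] EuclideanSpace ℝ (Fin (dims k))))
      (H : EuclideanSpace ℝ (Fin (dims 0)) →
        (EuclideanSpace ℝ (Fin (dims 0)) →L[ℝ]
          EuclideanSpace ℝ (Fin (dims 0)) →L[ℝ] EuclideanSpace ℝ (Fin (dims k)))),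
      (∀ x, HasFDerivAt (nnHidden dims W b k) (G x) x) ∧
      (∀ x, ‖G x‖ ≤ C ^ k) ∧
      (∀ x, HasFDerivAt G (H x) x) ∧
      (∀ x, ‖H x‖ ≤ Bb C k) := by
  intro k
  induction k with
  | zero =>
    intro _
    refine ⟨fun _ => ContinuousLinearMap.id ℝ _, fun _ => 0, fun x => ?_, fun x => ?_,
      fun x => hasFDerivAt_const _ _, fun x => by simp only [Bb]; exact le_of_eq ContinuousLinearMap.opNorm_zero⟩
    · simp only [nnHidden]
      exact hasFDerivAt_id x
    · rw [pow_zero]; exact ContinuousLinearMap.norm_id_le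
  | succ k ih =>
    intro hWk
    obtain ⟨G, H, hG, hGn, hH, hHn⟩ := ih fun i hi => hWk i (Nat.lt_succ_of_lt hi)
    have hWkC : ‖W k‖ ≤ C := hWk k (Nat.lt_succ_self k)
    set z : (EuclideanSpace ℝ (Fin (dims 0))) → (EuclideanSpace ℝ (Fin (dims (k + 1)))) := fun y => W k (nnHidden dims W b k y) + b k with hzdef
    have hz : ∀ x, HasFDerivAt z ((W k).comp (G x)) x := fun x =>
      ((W k).hasFDerivAt.comp x (hG x)).add_const (b k)
    set c : (EuclideanSpace ℝ (Fin (dims 0))) → ((EuclideanSpace ℝ (Fin (dims (k + 1)))) →L[ℝ] (EuclideanSpace ℝ (Fin (dims (k + 1))))) := fun x => diagE _ (dtanhE (z x)) with hcdef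
    set d : (EuclideanSpace ℝ (Fin (dims 0))) → ((EuclideanSpace ℝ (Fin (dims 0))) →L[ℝ] (EuclideanSpace ℝ (Fin (dims (k + 1))))) := fun x => (W k).comp (G x) with hddef
    set c' : (EuclideanSpace ℝ (Fin (dims 0))) → ((EuclideanSpace ℝ (Fin (dims 0))) →L[ℝ] ((EuclideanSpace ℝ (Fin (dims (k + 1)))) →L[ℝ] (EuclideanSpace ℝ (Fin (dims (k + 1)))))) :=
      fun x => ((diagE _).comp (diagP _ (d2tanhE (z x)))).comp ((W k).comp (G x)) with hc'def
    set d' : (EuclideanSpace ℝ (Fin (dims 0))) → ((EuclideanSpace ℝ (Fin (dims 0))) →L[ℝ] ((EuclideanSpace ℝ (Fin (dims 0))) →L[ℝ] (EuclideanSpace ℝ (Fin (dims (k + 1)))))) :=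
      fun x => (ContinuousLinearMap.compL ℝ (EuclideanSpace ℝ (Fin (dims 0))) (EuclideanSpace ℝ (Fin (dims k))) (EuclideanSpace ℝ (Fin (dims (k + 1)))) (W k)).comp (H x) with hd'def
    have hcd : ∀ x, HasFDerivAt c (c' x) x := fun x =>
      ((diagE _).hasFDerivAt.comp (z x) (hasFDerivAt_dtanhE (z x))).comp x (hz x)
    have hdd : ∀ x, HasFDerivAt d (d' x) x := fun x =>
      (ContinuousLinearMap.compL ℝ (EuclideanSpace ℝ (Fin (dims 0))) (EuclideanSpace ℝ (Fin (dims k))) (EuclideanSpace ℝ (Fin (dims (k + 1)))) (W k)).hasFDerivAt.comp x (hH x)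
    -- norm bounds for the pieces
    have hcn : ∀ x, ‖c x‖ ≤ 1 := fun x => (norm_diagE_apply_le _).trans (norm_dtanhE_le _)
    have hdn : ∀ x, ‖d x‖ ≤ C * C ^ k := fun x =>
      (ContinuousLinearMap.opNorm_comp_le _ _).trans
        (mul_le_mul hWkC (hGn x) (norm_nonneg _) hC.le)
    have hc'n : ∀ x, ‖c' x‖ ≤ 2 * (C * C ^ k) := by
      intro x
      calc ‖c' x‖
          ≤ ‖(diagE _).comp (diagP _ (d2tanhE (z x)))‖ * ‖(W k).comp (G x)‖ :=
            ContinuousLinearMap.opNorm_comp_le _ _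
        _ ≤ (‖diagE (dims (k + 1))‖ * ‖diagP _ (d2tanhE (z x))‖) * ‖(W k).comp (G x)‖ := by
            gcongr
            exact ContinuousLinearMap.opNorm_comp_le _ _
        _ ≤ (1 * 2) * (C * C ^ k) :=
            mul_le_mul (mul_le_mul norm_diagE_le
              ((norm_diagP_apply_le _).trans (norm_d2tanhE_le _)) (norm_nonneg _) zero_le_one)
              (hdn x) (norm_nonneg _) (by norm_num)
        _ = 2 * (C * C ^ k) := by ring
    have hd'n : ∀ x, ‖d' x‖ ≤ C * Bb C k := by
      intro x
      calc ‖d' x‖ ≤ ‖W k‖ * ‖H x‖ := norm_compL_comp_le (W k) (H x)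
        _ ≤ C * Bb C k := mul_le_mul hWkC (hHn x) (norm_nonneg (H x)) hC.le
    refine ⟨fun x => (c x).comp (d x),
      fun x => (ContinuousLinearMap.compL ℝ (EuclideanSpace ℝ (Fin (dims 0))) (EuclideanSpace ℝ (Fin (dims (k + 1)))) (EuclideanSpace ℝ (Fin (dims (k + 1)))) (c x)).comp (d' x) +
        ((ContinuousLinearMap.compL ℝ (EuclideanSpace ℝ (Fin (dims 0))) (EuclideanSpace ℝ (Fin (dims (k + 1)))) (EuclideanSpace ℝ (Fin (dims (k + 1))))).flip (d x)).comp (c' x),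
      fun x => ?_, fun x => ?_, fun x => (hcd x).clm_comp (hdd x), fun x => ?_⟩
    · simp only [nnHidden]
      exact (hasFDerivAt_tanhVec (z x)).comp x (hz x)
    · calc ‖(c x).comp (d x)‖ ≤ ‖c x‖ * ‖d x‖ := ContinuousLinearMap.opNorm_comp_le _ _
        _ ≤ 1 * (C * C ^ k) := mul_le_mul (hcn x) (hdn x) (norm_nonneg _) zero_le_one
        _ = C ^ (k + 1) := by ring
    · show ‖(ContinuousLinearMap.compL ℝ (EuclideanSpace ℝ (Fin (dims 0))) (EuclideanSpace ℝ (Fin (dims (k + 1)))) (EuclideanSpace ℝ (Fin (dims (k + 1)))) (c x)).comp (d' x) +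
        ((ContinuousLinearMap.compL ℝ (EuclideanSpace ℝ (Fin (dims 0))) (EuclideanSpace ℝ (Fin (dims (k + 1)))) (EuclideanSpace ℝ (Fin (dims (k + 1))))).flip (d x)).comp (c' x)‖ ≤ Bb C (k + 1)
      have h1 : ‖(ContinuousLinearMap.compL ℝ (EuclideanSpace ℝ (Fin (dims 0))) (EuclideanSpace ℝ (Fin (dims (k + 1)))) (EuclideanSpace ℝ (Fin (dims (k + 1)))) (c x)).comp (d' x)‖
          ≤ 1 * (C * Bb C k) := by
        refine le_trans (norm_compL_comp_le (c x) (d' x)) ?_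
        exact mul_le_mul (hcn x) (hd'n x) (norm_nonneg (d' x)) zero_le_one
      have h2 : ‖((ContinuousLinearMap.compL ℝ (EuclideanSpace ℝ (Fin (dims 0))) (EuclideanSpace ℝ (Fin (dims (k + 1)))) (EuclideanSpace ℝ (Fin (dims (k + 1))))).flip (d x)).comp (c' x)‖
          ≤ (C * C ^ k) * (2 * (C * C ^ k)) := by
        refine le_trans (norm_compL_flip_comp_le (d x) (c' x)) ?_
        calc ‖c' x‖ * ‖d x‖ ≤ (2 * (C * C ^ k)) * (C * C ^ k) :=
              mul_le_mul (hc'n x) (hdn x) (norm_nonneg (d x)) (by positivity)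
          _ = (C * C ^ k) * (2 * (C * C ^ k)) := by ring
      calc ‖_ + _‖ ≤ _ + _ := norm_add_le _ _
        _ ≤ 1 * (C * Bb C k) + (C * C ^ k) * (2 * (C * C ^ k)) := add_le_add h1 h2
        _ = Bb C (k + 1) := by rw [Bb]; ring


end NNAux

/-- If every weight matrix of a fully connected tanh network with `nl` layers
has spectral norm at most `C` (with `C > 0`, `C ≠ 1`), then the second Fréchet
derivative of the network `f_θ(x) = W_{nl} y_{nl}(x) + b_{nl}` satisfies
`‖∂²f_θ(x)/∂x²‖₂ ≤ 2 C^{nl+1} (C^{nl-1} − 1)/(C − 1)` for every input `x`,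
where the norm is the operator norm of the second derivative as a bilinear map. -/
theorem nn_second_derivative_bound
    (nl : ℕ) (hnl : 1 ≤ nl) (dims : ℕ → ℕ)
    (W : ∀ i : ℕ, EuclideanSpace ℝ (Fin (dims i)) →L[ℝ] EuclideanSpace ℝ (Fin (dims (i + 1))))
    (b : ∀ i : ℕ, EuclideanSpace ℝ (Fin (dims (i + 1))))
    (C : ℝ) (hC : 0 < C) (hC1 : C ≠ 1)
    (hW : ∀ i < nl, ‖W i‖ ≤ C) :
    ∀ x : EuclideanSpace ℝ (Fin (dims 0)),
      ‖iteratedFDeriv ℝ 2 (fun y => W (nl - 1) (nnHidden dims W b (nl - 1) y) + b (nl - 1)) x‖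
        ≤ 2 * C ^ (nl + 1) * ((C ^ (nl - 1) - 1) / (C - 1)) := by
  obtain ⟨m, rfl⟩ : ∃ m, nl = m + 1 := ⟨nl - 1, (Nat.succ_pred_eq_of_pos hnl).symm⟩
  intro x
  simp only [Nat.add_sub_cancel]
  obtain ⟨G, H, hG, hGn, hH, hHn⟩ := nn_deriv_bounds dims W b C hC m
    (fun i hi => hW i (Nat.lt_succ_of_lt hi))
  have hWmC : ‖W m‖ ≤ C := hW m (Nat.lt_succ_self m)
  have hf : ∀ y, HasFDerivAt (fun y => W m (nnHidden dims W b m y) + b m)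
      ((W m).comp (G y)) y := fun y => ((W m).hasFDerivAt.comp y (hG y)).add_const (b m)
  have hGf : ∀ y, HasFDerivAt (fun y => (W m).comp (G y))
      ((ContinuousLinearMap.compL ℝ (EuclideanSpace ℝ (Fin (dims 0)))
        (EuclideanSpace ℝ (Fin (dims m))) (EuclideanSpace ℝ (Fin (dims (m + 1)))) (W m)).comp
        (H y)) y := fun y =>
    (ContinuousLinearMap.compL ℝ (EuclideanSpace ℝ (Fin (dims 0)))
      (EuclideanSpace ℝ (Fin (dims m))) (EuclideanSpace ℝ (Fin (dims (m + 1))))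
      (W m)).hasFDerivAt.comp y (hH y)
  have hfd : fderiv ℝ (fun y => W m (nnHidden dims W b m y) + b m)
      = fun y => (W m).comp (G y) := funext fun y => (hf y).fderiv
  have h2 : fderiv ℝ (fderiv ℝ (fun y => W m (nnHidden dims W b m y) + b m)) x
      = (ContinuousLinearMap.compL ℝ (EuclideanSpace ℝ (Fin (dims 0)))
        (EuclideanSpace ℝ (Fin (dims m))) (EuclideanSpace ℝ (Fin (dims (m + 1)))) (W m)).comp
        (H x) := by
    rw [hfd]
    exact (hGf x).fderiv
  have hkey : ‖iteratedFDeriv ℝ 2 (fun y => W m (nnHidden dims W b m y) + b m) x‖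
      ≤ ‖fderiv ℝ (fderiv ℝ (fun y => W m (nnHidden dims W b m y) + b m)) x‖ := by
    refine ContinuousMultilinearMap.opNorm_le_bound (norm_nonneg (fderiv ℝ (fderiv ℝ (fun y => W m (nnHidden dims W b m y) + b m)) x)) fun mv => ?_
    rw [iteratedFDeriv_two_apply]
    calc ‖fderiv ℝ (fderiv ℝ (fun y => W m (nnHidden dims W b m y) + b m)) x (mv 0) (mv 1)‖
        ≤ ‖fderiv ℝ (fderiv ℝ (fun y => W m (nnHidden dims W b m y) + b m)) x‖
            * ‖mv 0‖ * ‖mv 1‖ := ContinuousLinearMap.le_opNorm₂ _ _ _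
      _ = _ := by rw [Fin.prod_univ_two]; ring
  refine hkey.trans ?_
  rw [h2]
  refine ((norm_compL_comp_le (W m) (H x)).trans
    (mul_le_mul hWmC (hHn x) (norm_nonneg (H x)) hC.le)).trans ?_
  rw [Bb_eq C hC1 m]
  exact le_of_eq (by ring)
end

section
/- Consider the 1D diffusion equation u_t = f(x) u_{xx} on [−1,1] × [t₀, t₁], uniform grid x_i with spacing h, t₁ = t₀ + Δt, exact values u_{0i} = u(x_i, t₀), u_{1i} = u(x_i, t₁), and observations U_{ki} = u_{ki} + W_{ki} with |W_{ki}| ≤ ε_o. Assume: u ∈ C⁴([−1,1] × [t₀, t₁]) with u_{xx}(x,t) ≥ δ₂ > 0 and |u_{xxxx}(x,t)| ≤ δ₄ on [−1,1] × [t₀, t₁]; h < √(6δ₂/δ₄); |f_θ(x)| ≤ F₀ on [−1,1]; the consistency residual of the exact solution at interior grid point x_i is bounded by ε_c, i.e. | (u_{1i} − u_{0i})/Δt − f(x_i)(u_{1,i+1} + u_{1,i−1} − 2u_{1i})/(2h²) − f(x_i)(u_{0,i+1} + u_{0,i−1} − 2u_{0i})/(2h²) | ≤ ε_c; and the optimization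 residual at x_i is bounded by ε_opt, i.e. | (U_{1i} − U_{0i})/Δt − f_θ(x_i)(U_{1,i+1} + U_{1,i−1} − 2U_{1i})/(2h²) − f_θ(x_i)(U_{0,i+1} + U_{0,i−1} − 2U_{0i})/(2h²) | ≤ ε_opt. Then at every interior grid point x_i, |f(x_i) − f_θ(x_i)| ≤ (2/δ₂) [ ε_opt + ε_c + 2(1/Δt + 2F₀/h²) ε_o ]. -/
set_option linter.unusedVariables false
set_option maxHeartbeats 1000000


lemma aux_secdiff {g : ℝ → ℝ} {δ₂ : ℝ}
    (hg : ContDiffOn ℝ 4 g (Set.Icc (-1:ℝ) 1))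
    (hg2 : ∀ X ∈ Set.Icc (-1:ℝ) 1, δ₂ ≤ iteratedDerivWithin 2 g (Set.Icc (-1:ℝ) 1) X)
    {X h : ℝ} (hh : 0 < h)
    (hm : X - h ∈ Set.Icc (-1:ℝ) 1) (hp : X + h ∈ Set.Icc (-1:ℝ) 1) :
    δ₂ * h ^ 2 ≤ g (X + h) + g (X - h) - 2 * g X := by
  set s : Set ℝ := Set.Icc (-1:ℝ) 1 with hs
  have hconv : Convex ℝ s := convex_Icc _ _
  have huniq : UniqueDiffOn ℝ s := uniqueDiffOn_Icc (by norm_num)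
  have hint : interior s = Set.Ioo (-1:ℝ) 1 := interior_Icc
  have hd1 : ContDiffOn ℝ 3 (derivWithin g s) s := hg.derivWithin huniq (by norm_num)
  have hmem : ∀ y ∈ Set.Ioo (-1:ℝ) 1, s ∈ nhds y := fun y hy => Icc_mem_nhds hy.1 hy.2
  have hEq : ∀ y ∈ Set.Ioo (-1:ℝ) 1, derivWithin g s y = deriv g y :=
    fun y hy => derivWithin_of_mem_nhds (hmem y hy)
  have hdiffg : DifferentiableOn ℝ g (interior s) :=
    (hg.differentiableOn (by norm_num)).mono interior_subset
  have hdiffd : DifferentiableOn ℝ (deriv g) (Set.Ioo (-1:ℝ) 1) :=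
    (((hd1.differentiableOn (by norm_num)).mono Set.Ioo_subset_Icc_self)).congr
      (fun y hy => (hEq y hy).symm)
  have hgAt : ∀ y ∈ Set.Ioo (-1:ℝ) 1, DifferentiableAt ℝ g y := fun y hy =>
    ((hg.contDiffAt (hmem y hy)).differentiableAt (by norm_num))
  have hiter : ∀ y ∈ Set.Ioo (-1:ℝ) 1, iteratedDerivWithin 2 g s y = deriv (deriv g) y := by
    intro y hy
    have hys : y ∈ s := Set.Ioo_subset_Icc_self hy
    have h1 : iteratedDerivWithin 2 g s y = derivWithin (derivWithin g s) s y := by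
      rw [show (2:ℕ) = 1 + 1 from rfl, iteratedDerivWithin_succ]
      exact derivWithin_congr (fun z hz => congrFun iteratedDerivWithin_one z)
        (congrFun iteratedDerivWithin_one y)
    rw [h1, derivWithin_of_mem_nhds (hmem y hy)]
    exact Filter.EventuallyEq.deriv_eq
      (Filter.eventuallyEq_of_mem (Ioo_mem_nhds hy.1 hy.2) hEq)
  have hderivφ : ∀ y ∈ Set.Ioo (-1:ℝ) 1,
      deriv (fun z => g z - δ₂/2 * z^2) y = deriv g y - δ₂ * y := by
    intro y hy
    rw [deriv_fun_sub (hgAt y hy) (by fun_prop)]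
    simp [deriv_const_mul, mul_comm]
    ring
  have hφconv : ConvexOn ℝ s (fun z => g z - δ₂/2 * z^2) := by
    apply convexOn_of_deriv2_nonneg hconv
    · exact hg.continuousOn.sub (by fun_prop)
    · exact hdiffg.sub (by fun_prop)
    · rw [hint]
      exact (hdiffd.sub (by fun_prop)).congr (fun y hy => hderivφ y hy)
    · intro y hy
      rw [hint] at hy
      have h2 : deriv^[2] (fun z => g z - δ₂/2 * z^2) y
          = deriv (deriv (fun z => g z - δ₂/2 * z^2)) y := by
        simp [Function.iterate_succ_apply']
      rw [h2]
      have h3 : deriv (deriv (fun z => g z - δ₂/2 * z^2)) y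
          = deriv (fun z => deriv g z - δ₂ * z) y :=
        Filter.EventuallyEq.deriv_eq
          (Filter.eventuallyEq_of_mem (Ioo_mem_nhds hy.1 hy.2) hderivφ)
      have h4 : deriv (fun z => deriv g z - δ₂ * z) y = deriv (deriv g) y - δ₂ := by
        rw [deriv_fun_sub (hdiffd.differentiableAt (Ioo_mem_nhds hy.1 hy.2)) (by fun_prop)]
        have h4' : deriv (HMul.hMul δ₂) y = δ₂ := by
          rw [show (HMul.hMul δ₂) = fun z : ℝ => δ₂ * z from rfl, deriv_const_mul_field]
          simp
        simp [h4']
      have h5 := hg2 y (Set.Ioo_subset_Icc_self hy)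
      rw [hiter y hy] at h5
      rw [h3, h4]; linarith
  have hmid := hφconv.2 hm hp (by norm_num : (0:ℝ) ≤ 1/2) (by norm_num : (0:ℝ) ≤ 1/2)
    (by norm_num : (1:ℝ)/2 + 1/2 = 1)
  simp only [smul_eq_mul] at hmid
  rw [show (1/2 : ℝ) * (X - h) + (1/2 : ℝ) * (X + h) = X by ring] at hmid
  nlinarith [hmid]



/-- Error bound at the interior grid points for the calibrated conductivity in
the 1D diffusion problem `u_t = f(x) u_{xx}` on `[−1,1] × [t₀, t₀+Δt]`:
on the uniform grid `x_i = −1 + i h` (0-indexed, `x_{n−1} = 1`), with noisy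
observations `U_{ki} = u(x_i, t_k) + W_{ki}`, `|W_{ki}| ≤ ε_o`, exact solution
`u ∈ C⁴` with `u_{xx} ≥ δ₂ > 0` and `|u_{xxxx}| ≤ δ₄`, grid satisfying
`h < √(6δ₂/δ₄)`, `|f_θ| ≤ F₀`, Crank–Nicolson consistency residual of the exact
solution bounded by `ε_c` and optimization residual of `f_θ` bounded by `ε_opt`
at interior grid points, one has
`|f(x_i) − f_θ(x_i)| ≤ (2/δ₂)[ε_opt + ε_c + 2(1/Δt + 2F₀/h²)ε_o]` at every
interior grid point. -/
theorem diffusion_inverse_grid_point_error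
    (t₀ Δt h ε_o ε_c ε_opt δ₂ δ₄ F₀ : ℝ)
    (hΔt : 0 < Δt) (hh : 0 < h)
    (n : ℕ) (hn : 3 ≤ n)
    (x : ℕ → ℝ) (hx : ∀ i, x i = -1 + i * h) (hgrid : x (n - 1) = 1)
    (u : ℝ → ℝ → ℝ) (f fθ : ℝ → ℝ)
    (W₀ W₁ U₀ U₁ : ℕ → ℝ)
    (hu : ContDiffOn ℝ 4 (fun p : ℝ × ℝ => u p.1 p.2)
      (Set.Icc (-1 : ℝ) 1 ×ˢ Set.Icc t₀ (t₀ + Δt)))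
    (hδ₂ : 0 < δ₂)
    (huxx : ∀ t ∈ Set.Icc t₀ (t₀ + Δt), ∀ X ∈ Set.Icc (-1 : ℝ) 1,
      δ₂ ≤ iteratedDerivWithin 2 (fun y => u y t) (Set.Icc (-1 : ℝ) 1) X)
    (huxxxx : ∀ t ∈ Set.Icc t₀ (t₀ + Δt), ∀ X ∈ Set.Icc (-1 : ℝ) 1,
      |iteratedDerivWithin 4 (fun y => u y t) (Set.Icc (-1 : ℝ) 1) X| ≤ δ₄)
    (hsmall : h < Real.sqrt (6 * δ₂ / δ₄))
    (hF₀ : ∀ X ∈ Set.Icc (-1 : ℝ) 1, |fθ X| ≤ F₀)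
    (hW₀ : ∀ i < n, |W₀ i| ≤ ε_o) (hW₁ : ∀ i < n, |W₁ i| ≤ ε_o)
    (hU₀ : ∀ i < n, U₀ i = u (x i) t₀ + W₀ i)
    (hU₁ : ∀ i < n, U₁ i = u (x i) (t₀ + Δt) + W₁ i)
    (hcons : ∀ i, 1 ≤ i → i ≤ n - 2 →
      |(u (x i) (t₀ + Δt) - u (x i) t₀) / Δt
        - f (x i) * (u (x (i + 1)) (t₀ + Δt) + u (x (i - 1)) (t₀ + Δt)
            - 2 * u (x i) (t₀ + Δt)) / (2 * h ^ 2)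
        - f (x i) * (u (x (i + 1)) t₀ + u (x (i - 1)) t₀
            - 2 * u (x i) t₀) / (2 * h ^ 2)| ≤ ε_c)
    (hopt : ∀ i, 1 ≤ i → i ≤ n - 2 →
      |(U₁ i - U₀ i) / Δt
        - fθ (x i) * (U₁ (i + 1) + U₁ (i - 1) - 2 * U₁ i) / (2 * h ^ 2)
        - fθ (x i) * (U₀ (i + 1) + U₀ (i - 1) - 2 * U₀ i) / (2 * h ^ 2)| ≤ ε_opt) :
    ∀ i, 1 ≤ i → i ≤ n - 2 →
      |f (x i) - fθ (x i)|
        ≤ 2 / δ₂ * (ε_opt + ε_c + 2 * (1 / Δt + 2 * F₀ / h ^ 2) * ε_o) := by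
  intro i hi1 hi2
  -- index facts
  have hiN : i < n := by omega
  have hip : i + 1 < n := by omega
  have him : i - 1 < n := by omega
  -- grid geometry
  have hcast : ((n - 1 : ℕ) : ℝ) = (n : ℝ) - 1 := by
    rw [Nat.cast_sub (by omega)]; norm_num
  have hlast : ((n : ℝ) - 1) * h = 2 := by
    have := hgrid
    rw [hx (n - 1), hcast] at this
    linarith
  have hiR1 : (1 : ℝ) ≤ (i : ℝ) := by exact_mod_cast hi1
  have hiR2 : (i : ℝ) ≤ (n : ℝ) - 2 := by
    have : (i : ℕ) + 2 ≤ n := by omega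
    have := (Nat.cast_le (α := ℝ)).2 this
    push_cast at this
    linarith
  have hxp : x (i + 1) = x i + h := by
    rw [hx, hx]; push_cast; ring
  have hxm : x (i - 1) = x i - h := by
    rw [hx, hx, Nat.cast_sub (by omega)]; push_cast; ring
  have hximem : x i ∈ Set.Icc (-1 : ℝ) 1 := by
    rw [hx]; constructor <;> nlinarith
  have hxmmem : x i - h ∈ Set.Icc (-1 : ℝ) 1 := by
    rw [hx]; constructor <;> nlinarith
  have hxpmem : x i + h ∈ Set.Icc (-1 : ℝ) 1 := by
    rw [hx]; constructor <;> nlinarith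
  -- time slices
  have ht0 : t₀ ∈ Set.Icc t₀ (t₀ + Δt) := by constructor <;> linarith
  have ht1 : t₀ + Δt ∈ Set.Icc t₀ (t₀ + Δt) := by constructor <;> linarith
  have hslice : ∀ t ∈ Set.Icc t₀ (t₀ + Δt),
      ContDiffOn ℝ 4 (fun y => u y t) (Set.Icc (-1 : ℝ) 1) := by
    intro t ht
    exact hu.comp ((contDiff_id.prodMk contDiff_const).contDiffOn)
      (fun y hy => ⟨hy, ht⟩)
  -- second-difference lower bounds
  have hD0 : δ₂ * h ^ 2 ≤ u (x i + h) t₀ + u (x i - h) t₀ - 2 * u (x i) t₀ :=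
    aux_secdiff (hslice t₀ ht0) (huxx t₀ ht0) hh hxmmem hxpmem
  have hD1 : δ₂ * h ^ 2 ≤ u (x i + h) (t₀ + Δt) + u (x i - h) (t₀ + Δt)
      - 2 * u (x i) (t₀ + Δt) :=
    aux_secdiff (hslice (t₀ + Δt) ht1) (huxx (t₀ + Δt) ht1) hh hxmmem hxpmem
  rw [← hxp, ← hxm] at hD0 hD1
  have hA := hcons i hi1 hi2
  have hB := hopt i hi1 hi2
  rw [hU₀ i hiN, hU₀ (i + 1) hip, hU₀ (i - 1) him,
    hU₁ i hiN, hU₁ (i + 1) hip, hU₁ (i - 1) him] at hB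
  -- abbreviations
  set a := f (x i) with ha
  set b := fθ (x i) with hb
  set D₀ := u (x (i + 1)) t₀ + u (x (i - 1)) t₀ - 2 * u (x i) t₀ with hD₀def
  set D₁ := u (x (i + 1)) (t₀ + Δt) + u (x (i - 1)) (t₀ + Δt)
    - 2 * u (x i) (t₀ + Δt) with hD₁def
  set e₀ := W₀ (i + 1) + W₀ (i - 1) - 2 * W₀ i with he₀def
  set e₁ := W₁ (i + 1) + W₁ (i - 1) - 2 * W₁ i with he₁def
  set w := W₁ i - W₀ i with hwdef
  set A := (u (x i) (t₀ + Δt) - u (x i) t₀) / Δt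
    - a * D₁ / (2 * h ^ 2) - a * D₀ / (2 * h ^ 2) with hAdef
  set B := (u (x i) (t₀ + Δt) + W₁ i - (u (x i) t₀ + W₀ i)) / Δt
    - b * (u (x (i + 1)) (t₀ + Δt) + W₁ (i + 1)
        + (u (x (i - 1)) (t₀ + Δt) + W₁ (i - 1))
        - 2 * (u (x i) (t₀ + Δt) + W₁ i)) / (2 * h ^ 2)
    - b * (u (x (i + 1)) t₀ + W₀ (i + 1) + (u (x (i - 1)) t₀ + W₀ (i - 1))
        - 2 * (u (x i) t₀ + W₀ i)) / (2 * h ^ 2) with hBdef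
  set G := F₀ * ε_o / h ^ 2 with hGdef
  have hh2 : (0 : ℝ) < 2 * h ^ 2 := by positivity
  have hhne : h ≠ 0 := ne_of_gt hh
  have hΔne : Δt ≠ 0 := ne_of_gt hΔt
  set S := (D₁ + D₀) / (2 * h ^ 2) with hSdef
  have hS : δ₂ ≤ S := by
    rw [hSdef, le_div_iff₀ hh2]; linarith
  have hSpos : 0 < S := lt_of_lt_of_le hδ₂ hS
  -- key algebraic identity
  have key : (a - b) * S =
      B - A - w / Δt + b * e₁ / (2 * h ^ 2) + b * e₀ / (2 * h ^ 2) := by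
    rw [hBdef, hAdef, hSdef, hD₁def, hD₀def, he₁def, he₀def, hwdef]
    field_simp
    ring
  -- noise bounds
  have hεo : 0 ≤ ε_o := le_trans (abs_nonneg _) (hW₀ i hiN)
  have hεc : 0 ≤ ε_c := le_trans (abs_nonneg _) hA
  have hεopt : 0 ≤ ε_opt := le_trans (abs_nonneg _) hB
  have hF0 : 0 ≤ F₀ := le_trans (abs_nonneg _) (hF₀ (x i) hximem)
  have hwabs : |w| ≤ 2 * ε_o := by
    calc |w| ≤ |W₁ i| + |W₀ i| := abs_sub _ _
    _ ≤ 2 * ε_o := by have := hW₁ i hiN; have := hW₀ i hiN; linarith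
  have he₀abs : |e₀| ≤ 4 * ε_o := by
    have h1 := hW₀ (i + 1) hip
    have h2 := hW₀ (i - 1) him
    have h3 := hW₀ i hiN
    calc |e₀| ≤ |W₀ (i + 1) + W₀ (i - 1)| + |2 * W₀ i| := abs_sub _ _
    _ ≤ |W₀ (i + 1)| + |W₀ (i - 1)| + 2 * |W₀ i| := by
        have := abs_add_le (W₀ (i + 1)) (W₀ (i - 1))
        rw [abs_mul]; simp only [abs_two]; linarith
    _ ≤ 4 * ε_o := by linarith
  have he₁abs : |e₁| ≤ 4 * ε_o := by
    have h1 := hW₁ (i + 1) hip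
    have h2 := hW₁ (i - 1) him
    have h3 := hW₁ i hiN
    calc |e₁| ≤ |W₁ (i + 1) + W₁ (i - 1)| + |2 * W₁ i| := abs_sub _ _
    _ ≤ |W₁ (i + 1)| + |W₁ (i - 1)| + 2 * |W₁ i| := by
        have := abs_add_le (W₁ (i + 1)) (W₁ (i - 1))
        rw [abs_mul]; simp only [abs_two]; linarith
    _ ≤ 4 * ε_o := by linarith
  have hwdiv : |w / Δt| ≤ 2 * ε_o / Δt := by
    rw [abs_div, abs_of_pos hΔt]
    gcongr
  have hq : ∀ e : ℝ, |e| ≤ 4 * ε_o → |b * e / (2 * h ^ 2)| ≤ 2 * G := by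
    intro e he
    rw [hGdef, abs_div, abs_mul, abs_of_pos hh2]
    have h1 : |b| * |e| ≤ F₀ * (4 * ε_o) :=
      mul_le_mul (hF₀ (x i) hximem) he (abs_nonneg _) hF0
    calc |b| * |e| / (2 * h ^ 2) ≤ F₀ * (4 * ε_o) / (2 * h ^ 2) := by gcongr
    _ = 2 * (F₀ * ε_o / h ^ 2) := by field_simp; ring
  have hq1 := hq e₁ he₁abs
  have hq0 := hq e₀ he₀abs
  clear_value a b D₀ D₁ e₀ e₁ w A B S G
  -- combine
  have hbound : |(a - b) * S| ≤ ε_opt + ε_c + 2 * ε_o / Δt + 4 * G := by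
    rw [key]
    have l1 := abs_le.1 hB
    have l2 := abs_le.1 hA
    have l3 := abs_le.1 hwdiv
    have l4 := abs_le.1 hq1
    have l5 := abs_le.1 hq0
    rw [abs_le]
    constructor
    · linarith [l1.1, l2.2, l3.2, l4.1, l5.1]
    · linarith [l1.2, l2.1, l3.1, l4.2, l5.2]
  have habs : |a - b| * S ≤ ε_opt + ε_c + 2 * ε_o / Δt + 4 * G := by
    rw [← abs_of_pos hSpos, ← abs_mul]; exact hbound
  have hE : 0 ≤ ε_opt + ε_c + 2 * ε_o / Δt + 4 * G := by
    have h1 : (0:ℝ) ≤ 2 * ε_o / Δt := by positivity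
    have h2 : (0:ℝ) ≤ G := by rw [hGdef]; positivity
    linarith
  have hfin : |a - b| * δ₂ ≤ ε_opt + ε_c + 2 * ε_o / Δt + 4 * G := by
    have := mul_le_mul_of_nonneg_left hS (abs_nonneg (a - b))
    linarith
  have h1 : |a - b| ≤ (ε_opt + ε_c + 2 * ε_o / Δt + 4 * G) / δ₂ :=
    (le_div_iff₀ hδ₂).2 hfin
  have h2 : 2 / δ₂ * (ε_opt + ε_c + 2 * (1 / Δt + 2 * F₀ / h ^ 2) * ε_o)
      = 2 * ((ε_opt + ε_c + 2 * ε_o / Δt + 4 * G) / δ₂) := by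
    rw [hGdef]
    field_simp
    ring
  have h3 : 0 ≤ (ε_opt + ε_c + 2 * ε_o / Δt + 4 * G) / δ₂ :=
    div_nonneg hE (le_of_lt hδ₂)
  rw [h2]
  linarith
end
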